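/- arXiv:2108.13565 — 6 statements merged into one kernel-verified Lean document; each statement's English description precedes it below -/
import Mathlib

section
/- For every natural number n ≥ 7, the family of blocks B_j = {j, j + 1, j + 3} ⊆ ZMod n, for j ∈ ZMod n, is a combinatorial (n₃) configuration: the n blocks are pairwise distinct, each block has exactly 3 elements, every point of ZMod n lies in exactly 3 blocks, and any two distinct blocks intersect in at most one point. Consequently, combinatorial (n₃) configurations exist for every n ≥ 7. -/
/-- For every `n ≥ 7`, the family `𝒞(n,1,3)` of blocks `{j, j+1, j+3} ⊆ ZMod n`
is a combinatorial `(n₃)` configuration: the blocks are pairwise distinct, each has exactly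
3 elements, every point lies in exactly 3 blocks, and two distinct blocks meet in at most
one point. Hence combinatorial `(n₃)` configurations exist for every `n ≥ 7`. -/
theorem cyclic_n13_is_combinatorial_configuration (n : ℕ) (hn : 7 ≤ n) :
    Function.Injective (fun j : ZMod n => ({j, j + 1, j + 3} : Finset (ZMod n))) ∧
    (∀ j : ZMod n, ({j, j + 1, j + 3} : Finset (ZMod n)).card = 3) ∧
    (∀ x : ZMod n, {j : ZMod n | x ∈ ({j, j + 1, j + 3} : Finset (ZMod n))}.ncard = 3) ∧
    (∀ j k : ZMod n, j ≠ k →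
      (({j, j + 1, j + 3} : Finset (ZMod n)) ∩ ({k, k + 1, k + 3} : Finset (ZMod n))).card ≤ 1) := by
  haveI : NeZero n := ⟨by omega⟩
  -- small natural casts are injective
  have eqNum : ∀ a b : ℕ, a < 7 → b < 7 → ((a : ZMod n) = (b : ZMod n)) → a = b := by
    intro a b ha hb h
    rw [ZMod.natCast_eq_natCast_iff, Nat.ModEq,
      Nat.mod_eq_of_lt (by omega), Nat.mod_eq_of_lt (by omega)] at h
    exact h
  have zeroNum : ∀ m : ℕ, m < 7 → ((m : ℕ) : ZMod n) = 0 → m = 0 := by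
    intro m hm h
    exact eqNum m 0 hm (by omega) (by simpa using h)
  have h1 : (1 : ZMod n) ≠ 0 := by
    intro h
    have := zeroNum 1 (by omega) (by exact_mod_cast h)
    omega
  have h2 : (2 : ZMod n) ≠ 0 := by
    intro h
    have := zeroNum 2 (by omega) (by exact_mod_cast h)
    omega
  have h3 : (3 : ZMod n) ≠ 0 := by
    intro h
    have := zeroNum 3 (by omega) (by exact_mod_cast h)
    omega
  -- membership characterization with natural offsets
  have memc : ∀ x j : ZMod n, x ∈ ({j, j + 1, j + 3} : Finset (ZMod n)) →
      ∃ a : ℕ, (a = 0 ∨ a = 1 ∨ a = 3) ∧ x = j + (a : ℕ) := by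
    intro x j hx
    simp only [Finset.mem_insert, Finset.mem_singleton] at hx
    rcases hx with h | h | h
    · exact ⟨0, Or.inl rfl, by simpa using h⟩
    · exact ⟨1, Or.inr (Or.inl rfl), by exact_mod_cast h⟩
    · exact ⟨3, Or.inr (Or.inr rfl), by exact_mod_cast h⟩
  have comb : ∀ (j k : ZMod n) (a b c d : ℕ), a + d < 7 → b + c < 7 →
      j + (a : ℕ) = k + (b : ℕ) → j + (c : ℕ) = k + (d : ℕ) → a + d = b + c := by
    intro j k a b c d had hbc e1 e2
    have h : ((a + d : ℕ) : ZMod n) = ((b + c : ℕ) : ZMod n) := by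
      push_cast
      linear_combination e1 - e2
    exact eqNum _ _ had hbc h
  refine ⟨?_, ?_, ?_, ?_⟩
  · -- injectivity
    intro j k h
    simp only at h
    have hj : j ∈ ({k, k + 1, k + 3} : Finset (ZMod n)) := by
      rw [← h]; simp
    have hk : k ∈ ({j, j + 1, j + 3} : Finset (ZMod n)) := by
      rw [h]; simp
    obtain ⟨b, hb, hjb⟩ := memc j k hj
    obtain ⟨a, ha, hka⟩ := memc k j hk
    have hz : ((a + b : ℕ) : ZMod n) = 0 := by
      push_cast
      linear_combination -hjb - hka
    have := zeroNum (a + b) (by omega) hz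
    have hb0 : b = 0 := by omega
    rw [hb0] at hjb
    simpa using hjb
  · -- card = 3
    intro j
    have e1 : j ≠ j + 1 := by
      intro h
      exact h1 (by linear_combination -h)
    have e3 : j ≠ j + 3 := by
      intro h
      exact h3 (by linear_combination -h)
    have e13 : j + 1 ≠ j + 3 := by
      intro h
      exact h2 (by linear_combination -h)
    rw [Finset.card_insert_of_notMem (by simp [e1, e3]),
      Finset.card_insert_of_notMem (by simp [e13]), Finset.card_singleton]
  · -- every point in exactly 3 blocks
    intro x
    have hSa : {j : ZMod n | x ∈ ({j, j + 1, j + 3} : Finset (ZMod n))} =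
        ↑({x, x - 1, x - 3} : Finset (ZMod n)) := by
      ext j
      simp only [Set.mem_setOf_eq, Finset.mem_insert, Finset.mem_singleton,
        Finset.coe_insert, Set.mem_insert_iff, Finset.coe_singleton, Set.mem_singleton_iff]
      constructor
      · rintro (h | h | h)
        · exact Or.inl h.symm
        · exact Or.inr (Or.inl (by rw [h]; ring))
        · exact Or.inr (Or.inr (by rw [h]; ring))
      · rintro (h | h | h)
        · exact Or.inl h.symm
        · subst h; exact Or.inr (Or.inl (by ring))
        · subst h; exact Or.inr (Or.inr (by ring))
    rw [hSa, Set.ncard_coe_finset]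
    have e1 : x ≠ x - 1 := by
      intro h
      exact h1 (by linear_combination h)
    have e3 : x ≠ x - 3 := by
      intro h
      exact h3 (by linear_combination h)
    have e13 : x - 1 ≠ x - 3 := by
      intro h
      exact h2 (by linear_combination h)
    rw [Finset.card_insert_of_notMem (by simp [e1, e3]),
      Finset.card_insert_of_notMem (by simp [e13]), Finset.card_singleton]
  · -- two distinct blocks meet in at most one point
    intro j k hjk
    by_contra hc
    push_neg at hc
    obtain ⟨x, hx, y, hy, hxy⟩ := Finset.one_lt_card.mp hc
    rw [Finset.mem_inter] at hx hy
    obtain ⟨a, ha, e1⟩ := memc x j hx.1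
    obtain ⟨b, hb, e2⟩ := memc x k hx.2
    obtain ⟨c, hcc, e3⟩ := memc y j hy.1
    obtain ⟨d, hd, e4⟩ := memc y k hy.2
    have hsum : a + d = b + c :=
      comb j k a b c d (by omega) (by omega) (e1 ▸ e2) (e3 ▸ e4)
    have hac : a ≠ c := by
      intro h
      apply hxy
      rw [e1, e3, h]
    have hab : a ≠ b := by
      intro h
      apply hjk
      rw [h] at e1
      have := e1.symm.trans e2
      exact add_right_cancel this
    rcases ha with rfl | rfl | rfl <;> rcases hb with rfl | rfl | rfl <;>
      rcases hcc with rfl | rfl | rfl <;> rcases hd with rfl | rfl | rfl <;> omega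
end

section
/- For every natural number n with 1 ≤ n ≤ 6, there is no combinatorial (n₃) configuration. That is, there is no family L : Fin n → Finset (Fin n) of n pairwise distinct blocks such that every block has exactly 3 elements, every point of Fin n lies in exactly 3 blocks, and any two distinct blocks intersect in at most one point. Combined with the construction 𝒞(n,1,3), combinatorial (n₃) configurations exist if and only if n ≥ 7. -/
/-- For `1 ≤ n ≤ 6` there is no combinatorial `(n₃)` configuration: no family
of `n` pairwise distinct 3-element blocks of an `n`-element point set in which every point
lies in exactly 3 blocks and any two distinct blocks meet in at most one point. -/
theorem no_n3_configuration_of_le_six (n : ℕ) (h1 : 1 ≤ n) (h6 : n ≤ 6) :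
    ¬ ∃ L : Fin n → Finset (Fin n),
        Function.Injective L ∧
        (∀ j : Fin n, (L j).card = 3) ∧
        (∀ x : Fin n, (Finset.univ.filter (fun j : Fin n => x ∈ L j)).card = 3) ∧
        (∀ j k : Fin n, j ≠ k → (L j ∩ L k).card ≤ 1) := by
  rintro ⟨L, -, hcard, hpt, hmeet⟩
  set j₀ : Fin n := ⟨0, h1⟩ with hj₀
  -- blocks through x other than j₀
  set A : Fin n → Finset (Fin n) :=
    fun x => (Finset.univ.filter (fun k : Fin n => x ∈ L k)).erase j₀ with hA
  have hAcard : ∀ x ∈ L j₀, (A x).card = 2 := by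
    intro x hx
    have hj : j₀ ∈ Finset.univ.filter (fun k : Fin n => x ∈ L k) := by
      simp [hx]
    have := Finset.card_erase_of_mem hj
    rw [hA]; simp only
    rw [Finset.card_erase_of_mem hj, hpt x]
  have hdisj : ∀ x ∈ L j₀, ∀ y ∈ L j₀, x ≠ y → Disjoint (A x) (A y) := by
    intro x hx y hy hxy
    rw [Finset.disjoint_left]
    intro k hkx hky
    have hkne : k ≠ j₀ := Finset.ne_of_mem_erase hkx
    have hxk : x ∈ L k := (Finset.mem_filter.1 (Finset.mem_of_mem_erase hkx)).2
    have hyk : y ∈ L k := (Finset.mem_filter.1 (Finset.mem_of_mem_erase hky)).2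
    have hsub : ({x, y} : Finset (Fin n)) ⊆ L k ∩ L j₀ := by
      intro z hz
      rcases Finset.mem_insert.1 hz with rfl | hz
      · exact Finset.mem_inter.2 ⟨hxk, hx⟩
      · rw [Finset.mem_singleton] at hz; subst hz
        exact Finset.mem_inter.2 ⟨hyk, hy⟩
    have h2 : 2 ≤ (L k ∩ L j₀).card := by
      calc 2 = ({x, y} : Finset (Fin n)).card := (Finset.card_pair hxy).symm
        _ ≤ _ := Finset.card_le_card hsub
    have := hmeet k j₀ hkne
    omega
  have hbi : ((L j₀).biUnion A).card = 6 := by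
    rw [Finset.card_biUnion hdisj]
    rw [Finset.sum_congr rfl hAcard, Finset.sum_const, hcard j₀]; rfl
  have hj₀notin : j₀ ∉ (L j₀).biUnion A := by
    simp only [Finset.mem_biUnion]
    rintro ⟨x, -, hx⟩
    exact (Finset.ne_of_mem_erase hx) rfl
  have h7 : (insert j₀ ((L j₀).biUnion A)).card = 7 := by
    rw [Finset.card_insert_of_notMem hj₀notin, hbi]
  have hle : (insert j₀ ((L j₀).biUnion A)).card ≤ n := by
    calc _ ≤ (Finset.univ : Finset (Fin n)).card := Finset.card_le_card (Finset.subset_univ _)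
      _ = n := Finset.card_univ.trans (Fintype.card_fin n)
  omega
end

section
/- Fix natural numbers n, a, b with 1 ≤ a < b < n. Suppose that none of the following six equations holds: b = n − a, 2b = n + a, 2b = n + 2a, 2b = n, b = 2a, 2a = n. Then 𝒞(n, a, b) is a combinatorial configuration: for any two distinct indices j, k ∈ ZMod n, the blocks A = {j, j + a, j + b} and B = {k, k + a, k + b} satisfy |A ∩ B| ≤ 1. -/
private lemma key_cfg {n u v : ℕ} (hn : 0 < n) (h : u ≡ v [MOD n]) (hle : v ≤ u)
    (hlt : u < v + 2 * n) : u = v ∨ u = v + n := by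
  have hd := (Nat.modEq_iff_dvd' hle).mp h.symm
  obtain ⟨c, hc⟩ := hd
  have hc2 : c < 2 := by
    by_contra hcc
    push_neg at hcc
    have : 2 * n ≤ n * c := by nlinarith
    omega
  interval_cases c <;> omega

set_option maxHeartbeats 1600000 in
/-- If `1 ≤ a < b < n` and none of the six degeneracy equations
`a + b = n`, `2b = n + a`, `2b = n + 2a`, `2b = n`, `b = 2a`, `2a = n` holds, then
`𝒞(n, a, b)` is a combinatorial configuration: any two distinct blocks
`{j, j+a, j+b}` and `{k, k+a, k+b}` of `ZMod n` meet in at most one point. -/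
theorem generalizedCyclic_is_configuration (n a b : ℕ)
    (ha : 1 ≤ a) (hab : a < b) (hbn : b < n)
    (h1 : a + b ≠ n) (h2 : 2 * b ≠ n + a) (h3 : 2 * b ≠ n + 2 * a)
    (h4 : 2 * b ≠ n) (h5 : b ≠ 2 * a) (h6 : 2 * a ≠ n) :
    ∀ j k : ZMod n, j ≠ k →
      (({j, j + (a : ZMod n), j + (b : ZMod n)} : Finset (ZMod n)) ∩
        ({k, k + (a : ZMod n), k + (b : ZMod n)} : Finset (ZMod n))).card ≤ 1 := by
  have hn : 0 < n := by omega
  have F0a : (a : ZMod n) ≠ 0 := by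
    intro h
    have : ((a : ℕ) : ZMod n) = ((0 : ℕ) : ZMod n) := by push_cast; linear_combination h
    rcases key_cfg hn ((ZMod.natCast_eq_natCast_iff _ _ _).mp this) (by omega) (by omega)
      with e | e <;> omega
  have F0b : (b : ZMod n) ≠ 0 := by
    intro h
    have : ((b : ℕ) : ZMod n) = ((0 : ℕ) : ZMod n) := by push_cast; linear_combination h
    rcases key_cfg hn ((ZMod.natCast_eq_natCast_iff _ _ _).mp this) (by omega) (by omega)
      with e | e <;> omega
  have Fab : (b : ZMod n) ≠ (a : ZMod n) := by
    intro h
    have : ((b : ℕ) : ZMod n) = ((a : ℕ) : ZMod n) := by push_cast; linear_combination h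
    rcases key_cfg hn ((ZMod.natCast_eq_natCast_iff _ _ _).mp this) (by omega) (by omega)
      with e | e <;> omega
  have F2a : (a : ZMod n) + a ≠ 0 := by
    intro h
    have : ((2 * a : ℕ) : ZMod n) = ((0 : ℕ) : ZMod n) := by push_cast; linear_combination h
    rcases key_cfg hn ((ZMod.natCast_eq_natCast_iff _ _ _).mp this) (by omega) (by omega)
      with e | e <;> omega
  have Fapb : (a : ZMod n) + b ≠ 0 := by
    intro h
    have : ((a + b : ℕ) : ZMod n) = ((0 : ℕ) : ZMod n) := by push_cast; linear_combination h
    rcases key_cfg hn ((ZMod.natCast_eq_natCast_iff _ _ _).mp this) (by omega) (by omega)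
      with e | e <;> omega
  have F2b : (b : ZMod n) + b ≠ 0 := by
    intro h
    have : ((2 * b : ℕ) : ZMod n) = ((0 : ℕ) : ZMod n) := by push_cast; linear_combination h
    rcases key_cfg hn ((ZMod.natCast_eq_natCast_iff _ _ _).mp this) (by omega) (by omega)
      with e | e <;> omega
  have Fa2b : (b : ZMod n) + b ≠ (a : ZMod n) := by
    intro h
    have : ((2 * b : ℕ) : ZMod n) = ((a : ℕ) : ZMod n) := by push_cast; linear_combination h
    rcases key_cfg hn ((ZMod.natCast_eq_natCast_iff _ _ _).mp this) (by omega) (by omega)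
      with e | e <;> omega
  have Fb2a : (b : ZMod n) ≠ (a : ZMod n) + a := by
    intro h
    have hc : ((b : ℕ) : ZMod n) = ((2 * a : ℕ) : ZMod n) := by push_cast; linear_combination h
    have hm := (ZMod.natCast_eq_natCast_iff _ _ _).mp hc
    rcases le_total b (2 * a) with hle | hle
    · rcases key_cfg hn hm.symm hle (by omega) with e | e <;> omega
    · rcases key_cfg hn hm hle (by omega) with e | e <;> omega
  have F2a2b : (b : ZMod n) + b ≠ (a : ZMod n) + a := by
    intro h
    have : ((2 * b : ℕ) : ZMod n) = ((2 * a : ℕ) : ZMod n) := by push_cast; linear_combination h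
    rcases key_cfg hn ((ZMod.natCast_eq_natCast_iff _ _ _).mp this) (by omega) (by omega)
      with e | e <;> omega
  intro j k hjk
  rw [Finset.card_le_one]
  intro x hx y hy
  simp only [Finset.mem_inter, Finset.mem_insert, Finset.mem_singleton] at hx hy
  obtain ⟨hx1, hx2⟩ := hx
  obtain ⟨hy1, hy2⟩ := hy
  rcases hx1 with rfl | rfl | rfl <;> rcases hy1 with rfl | rfl | rfl <;>
    rcases hx2 with h' | h' | h' <;> rcases hy2 with g' | g' | g' <;>
    first
    | rfl
    | exact absurd (by linear_combination h') hjk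
    | exact absurd (by linear_combination g') hjk
    | exact absurd (by linear_combination h' - g' : (a : ZMod n) = 0) F0a
    | exact absurd (by linear_combination g' - h' : (a : ZMod n) = 0) F0a
    | exact absurd (by linear_combination h' - g' : (b : ZMod n) = 0) F0b
    | exact absurd (by linear_combination g' - h' : (b : ZMod n) = 0) F0b
    | exact absurd (by linear_combination h' - g' : (b : ZMod n) = (a : ZMod n)) Fab
    | exact absurd (by linear_combination g' - h' : (b : ZMod n) = (a : ZMod n)) Fab
    | exact absurd (by linear_combination h' - g' : (a : ZMod n) + a = 0) F2a
    | exact absurd (by linear_combination g' - h' : (a : ZMod n) + a = 0) F2a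
    | exact absurd (by linear_combination h' - g' : (a : ZMod n) + b = 0) Fapb
    | exact absurd (by linear_combination g' - h' : (a : ZMod n) + b = 0) Fapb
    | exact absurd (by linear_combination h' - g' : (b : ZMod n) + b = 0) F2b
    | exact absurd (by linear_combination g' - h' : (b : ZMod n) + b = 0) F2b
    | exact absurd (by linear_combination h' - g' : (b : ZMod n) + b = (a : ZMod n)) Fa2b
    | exact absurd (by linear_combination g' - h' : (b : ZMod n) + b = (a : ZMod n)) Fa2b
    | exact absurd (by linear_combination h' - g' : (b : ZMod n) = (a : ZMod n) + a) Fb2a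
    | exact absurd (by linear_combination g' - h' : (b : ZMod n) = (a : ZMod n) + a) Fb2a
    | exact absurd (by linear_combination h' - g' : (b : ZMod n) + b = (a : ZMod n) + a) F2a2b
    | exact absurd (by linear_combination g' - h' : (b : ZMod n) + b = (a : ZMod n) + a) F2a2b
end

section
/- Fix natural numbers n, a, b with 1 ≤ a < b < n. If there exist distinct indices j, k ∈ ZMod n such that the blocks A = {j, j + a, j + b} and B = {k, k + a, k + b} of 𝒞(n, a, b) satisfy |A ∩ B| ≥ 2, then at least one of the following six equations holds: b = n − a, 2b = n + a, 2b = n + 2a, 2b = n, b = 2a, 2a = n. -/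
private lemma mem3_aux {n : ℕ} {j e : ZMod n} {a b : ℕ}
    (h : e = j ∨ e = j + (a : ZMod n) ∨ e = j + (b : ZMod n)) :
    ∃ x : ℕ, (x = 0 ∨ x = a ∨ x = b) ∧ e = j + (x : ZMod n) := by
  rcases h with h | h | h
  · exact ⟨0, Or.inl rfl, by simpa using h⟩
  · exact ⟨a, Or.inr (Or.inl rfl), h⟩
  · exact ⟨b, Or.inr (Or.inr rfl), h⟩

private lemma cast_eq_cases_aux {n u v : ℕ} (hn : 0 < n)
    (h : (u : ZMod n) = (v : ZMod n)) (hu : u < 2 * n) (hv : v < 2 * n) :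
    u = v ∨ u + n = v ∨ v + n = u := by
  have hm : u % n = v % n := (ZMod.natCast_eq_natCast_iff u v n).mp h
  have h1 := Nat.div_add_mod u n
  have h2 := Nat.div_add_mod v n
  have hu' : u / n < 2 := Nat.div_lt_of_lt_mul (by omega)
  have hv' : v / n < 2 := Nat.div_lt_of_lt_mul (by omega)
  set q1 := u / n with hq1
  set q2 := v / n with hq2
  interval_cases q1 <;> interval_cases q2 <;> omega

set_option maxHeartbeats 1600000 in
/-- If `1 ≤ a < b < n` and two distinct blocks `{j, j+a, j+b}` and
`{k, k+a, k+b}` of `𝒞(n, a, b)` share at least two points, then one of the six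
degeneracy equations `a + b = n`, `2b = n + a`, `2b = n + 2a`, `2b = n`, `b = 2a`,
`2a = n` must hold. -/
theorem generalizedCyclic_degenerate_of_two_point_intersection (n a b : ℕ)
    (ha : 1 ≤ a) (hab : a < b) (hbn : b < n)
    (h : ∃ j k : ZMod n, j ≠ k ∧
      2 ≤ (({j, j + (a : ZMod n), j + (b : ZMod n)} : Finset (ZMod n)) ∩
        ({k, k + (a : ZMod n), k + (b : ZMod n)} : Finset (ZMod n))).card) :
    a + b = n ∨ 2 * b = n + a ∨ 2 * b = n + 2 * a ∨ 2 * b = n ∨ b = 2 * a ∨ 2 * a = n := by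
  have hn : 0 < n := by omega
  obtain ⟨j, k, hjk, hcard⟩ := h
  obtain ⟨e1, he1, e2, he2, hne⟩ := Finset.one_lt_card.mp hcard
  simp only [Finset.mem_inter, Finset.mem_insert, Finset.mem_singleton] at he1 he2
  obtain ⟨x1, hx1, hex1⟩ := mem3_aux he1.1
  obtain ⟨y1, hy1, hey1⟩ := mem3_aux he1.2
  obtain ⟨x2, hx2, hex2⟩ := mem3_aux he2.1
  obtain ⟨y2, hy2, hey2⟩ := mem3_aux he2.2
  have h1 : j + (x1 : ZMod n) = k + (y1 : ZMod n) := hex1.symm.trans hey1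
  have h2 : j + (x2 : ZMod n) = k + (y2 : ZMod n) := hex2.symm.trans hey2
  have key : ((x1 + y2 : ℕ) : ZMod n) = ((x2 + y1 : ℕ) : ZMod n) := by
    push_cast
    linear_combination h1 - h2
  have hxx : x1 ≠ x2 := by
    rintro rfl
    exact hne (hex1.trans hex2.symm)
  have hyy : y1 ≠ y2 := by
    rintro rfl
    exact hne (hey1.trans hey2.symm)
  have hxy1 : x1 ≠ y1 := by
    rintro rfl
    exact hjk (add_right_cancel h1)
  have hxy2 : x2 ≠ y2 := by
    rintro rfl
    exact hjk (add_right_cancel h2)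
  rcases hx1 with rfl | rfl | rfl <;> rcases hy1 with rfl | rfl | rfl <;>
    rcases hx2 with rfl | rfl | rfl <;> rcases hy2 with rfl | rfl | rfl <;>
    (have hsum := cast_eq_cases_aux hn key (by omega) (by omega); omega)
end

section
/- Fix natural numbers n, a, b with 1 ≤ a < b < n, and for j ∈ ZMod n let B_j = {j, j + a, j + b}. Then the following are equivalent: (i) there exist distinct indices j, k ∈ ZMod n with B_j = B_k as sets (equivalently, |B_j ∩ B_k| = 3); (ii) 3 divides n, a = n/3, and b = 2n/3. Moreover, when (ii) holds, for every j ∈ ZMod n the block B_{j + n/3} is distinct in index from B_j but equal to it as a set. -/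
lemma zcast_cases {n x y : ℕ} (hx : x < n) (hy : y < 3*n)
    (h : (x : ZMod n) = (y : ZMod n)) : y = x ∨ y = x + n ∨ y = x + 2*n := by
  rw [ZMod.natCast_eq_natCast_iff] at h
  have h1 : y % n = x := by
    have hx' : x % n = x := Nat.mod_eq_of_lt hx
    unfold Nat.ModEq at h
    omega
  have h2 := Nat.div_add_mod y n
  set q := y / n with hqdef
  have hq3 : q < 3 := by
    by_contra hc
    push_neg at hc
    have := Nat.mul_le_mul_left n hc
    omega
  interval_cases q <;> omega

/-- For `1 ≤ a < b < n`, two blocks of `𝒞(n, a, b)` with distinct indices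
coincide as sets iff `3 ∣ n`, `a = n/3` and `b = 2n/3`; and in that case, for every `j`,
the block indexed by `j + n/3` has index distinct from `j` but equals `B_j` as a set. -/
theorem generalizedCyclic_full_coincidence_iff (n a b : ℕ)
    (ha : 1 ≤ a) (hab : a < b) (hbn : b < n) :
    ((∃ j k : ZMod n, j ≠ k ∧
        ({j, j + (a : ZMod n), j + (b : ZMod n)} : Finset (ZMod n))
          = ({k, k + (a : ZMod n), k + (b : ZMod n)} : Finset (ZMod n)))
      ↔ (3 ∣ n ∧ a = n / 3 ∧ b = 2 * n / 3)) ∧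
    (3 ∣ n → a = n / 3 → b = 2 * n / 3 → ∀ j : ZMod n,
      j + ((n / 3 : ℕ) : ZMod n) ≠ j ∧
      ({j + ((n / 3 : ℕ) : ZMod n), j + ((n / 3 : ℕ) : ZMod n) + (a : ZMod n),
          j + ((n / 3 : ℕ) : ZMod n) + (b : ZMod n)} : Finset (ZMod n))
        = ({j, j + (a : ZMod n), j + (b : ZMod n)} : Finset (ZMod n))) := by
  have hn0 : 0 < n := by omega
  have key : 3 ∣ n → a = n / 3 → b = 2 * n / 3 → ∀ j : ZMod n,
      j + ((n / 3 : ℕ) : ZMod n) ≠ j ∧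
      ({j + ((n / 3 : ℕ) : ZMod n), j + ((n / 3 : ℕ) : ZMod n) + (a : ZMod n),
          j + ((n / 3 : ℕ) : ZMod n) + (b : ZMod n)} : Finset (ZMod n))
        = ({j, j + (a : ZMod n), j + (b : ZMod n)} : Finset (ZMod n)) := by
    rintro ⟨m, rfl⟩ ha' hb' j
    have hm : 0 < m := by omega
    have hdiv : 3 * m / 3 = m := by omega
    have ha2 : a = m := by omega
    have hb2 : b = 2 * m := by omega
    rw [hdiv]
    set d : ZMod (3*m) := ((m : ℕ) : ZMod (3*m)) with hd
    have hA : (a : ZMod (3*m)) = d := by rw [ha2]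
    have hB : (b : ZMod (3*m)) = d + d := by rw [hb2, hd]; push_cast; ring
    have h3d : d + d + d = 0 := by
      have : ((3*m : ℕ) : ZMod (3*m)) = 0 := ZMod.natCast_self _
      rw [hd]; push_cast at this ⊢; linear_combination this
    have hd0 : d ≠ 0 := by
      intro h
      have e : ((0:ℕ) : ZMod (3*m)) = ((m:ℕ) : ZMod (3*m)) := by
        push_cast; rw [← hd, h]
      rcases zcast_cases (by omega) (by omega) e with h' | h' | h' <;> omega
    constructor
    · intro h
      exact hd0 (by linear_combination h)
    · have e1 : j + d + (d + d) = j := by linear_combination h3d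
      rw [hA, hB, e1]
      have e2 : j + d + d = j + (d + d) := by ring
      rw [e2]
      ext x
      simp only [Finset.mem_insert, Finset.mem_singleton]
      tauto
  refine ⟨⟨?_, ?_⟩, key⟩
  · rintro ⟨j, k, hjk, hset⟩
    have amem : j ∈ ({k, k + (a:ZMod n), k + (b:ZMod n)} : Finset (ZMod n)) := by
      rw [← hset]; simp
    have bmem : j + (a:ZMod n) ∈ ({k, k + (a:ZMod n), k + (b:ZMod n)} : Finset (ZMod n)) := by
      rw [← hset]; simp
    have cmem : j + (b:ZMod n) ∈ ({k, k + (a:ZMod n), k + (b:ZMod n)} : Finset (ZMod n)) := by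
      rw [← hset]; simp
    simp only [Finset.mem_insert, Finset.mem_singleton] at amem bmem cmem
    rcases amem with h | h | h
    · exact absurd h hjk
    · -- j = k + a
      subst h
      rcases bmem with h2 | h2 | h2
      · -- 2a = 0
        have e : ((0:ℕ) : ZMod n) = ((2*a : ℕ) : ZMod n) := by push_cast; linear_combination h2.symm
        rcases zcast_cases (by omega) (by omega) e with h' | h' | h'
        all_goals (
          rcases cmem with h3 | h3 | h3
          · have e3 : ((0:ℕ) : ZMod n) = ((a+b : ℕ) : ZMod n) := by
              push_cast; linear_combination h3.symm
            rcases zcast_cases (by omega) (by omega) e3 with h'' | h'' | h'' <;> omega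
          · have e3 : ((0:ℕ) : ZMod n) = ((b : ℕ) : ZMod n) := by
              push_cast; linear_combination h3.symm
            rcases zcast_cases (by omega) (by omega) e3 with h'' | h'' | h'' <;> omega
          · have e3 : ((0:ℕ) : ZMod n) = ((a : ℕ) : ZMod n) := by
              push_cast; linear_combination h3.symm
            rcases zcast_cases (by omega) (by omega) e3 with h'' | h'' | h'' <;> omega)
      · -- a = 0
        have e : ((0:ℕ) : ZMod n) = ((a : ℕ) : ZMod n) := by push_cast; linear_combination h2.symm
        rcases zcast_cases (by omega) (by omega) e with h' | h' | h' <;> omega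
      · -- 2a ≡ b
        have e : ((b:ℕ) : ZMod n) = ((2*a : ℕ) : ZMod n) := by push_cast; linear_combination h2.symm
        rcases zcast_cases (by omega) (by omega) e with h' | h' | h'
        all_goals (
          rcases cmem with h3 | h3 | h3
          · have e3 : ((0:ℕ) : ZMod n) = ((a+b : ℕ) : ZMod n) := by
              push_cast; linear_combination h3.symm
            rcases zcast_cases (by omega) (by omega) e3 with h'' | h'' | h'' <;> omega
          · have e3 : ((0:ℕ) : ZMod n) = ((b : ℕ) : ZMod n) := by
              push_cast; linear_combination h3.symm
            rcases zcast_cases (by omega) (by omega) e3 with h'' | h'' | h'' <;> omega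
          · have e3 : ((0:ℕ) : ZMod n) = ((a : ℕ) : ZMod n) := by
              push_cast; linear_combination h3.symm
            rcases zcast_cases (by omega) (by omega) e3 with h'' | h'' | h'' <;> omega)
    · -- j = k + b
      subst h
      rcases bmem with h2 | h2 | h2
      · -- a + b = 0
        have e : ((0:ℕ) : ZMod n) = ((a+b : ℕ) : ZMod n) := by push_cast; linear_combination h2.symm
        rcases zcast_cases (by omega) (by omega) e with h' | h' | h'
        all_goals (
          rcases cmem with h3 | h3 | h3
          · have e3 : ((0:ℕ) : ZMod n) = ((2*b : ℕ) : ZMod n) := by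
              push_cast; linear_combination h3.symm
            rcases zcast_cases (by omega) (by omega) e3 with h'' | h'' | h'' <;> omega
          · have e3 : ((a:ℕ) : ZMod n) = ((2*b : ℕ) : ZMod n) := by
              push_cast; linear_combination h3.symm
            rcases zcast_cases (by omega) (by omega) e3 with h'' | h'' | h'' <;> omega
          · have e3 : ((0:ℕ) : ZMod n) = ((b : ℕ) : ZMod n) := by
              push_cast; linear_combination h3.symm
            rcases zcast_cases (by omega) (by omega) e3 with h'' | h'' | h'' <;> omega)
      · -- b = 0
        have e : ((0:ℕ) : ZMod n) = ((b : ℕ) : ZMod n) := by push_cast; linear_combination h2.symm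
        rcases zcast_cases (by omega) (by omega) e with h' | h' | h' <;> omega
      · -- a = 0
        have e : ((0:ℕ) : ZMod n) = ((a : ℕ) : ZMod n) := by push_cast; linear_combination h2.symm
        rcases zcast_cases (by omega) (by omega) e with h' | h' | h' <;> omega
  · rintro ⟨h1, h2, h3⟩
    obtain ⟨hne, hs⟩ := key h1 h2 h3 0
    exact ⟨0 + ((n / 3 : ℕ) : ZMod n), 0, hne, hs⟩
end

section
/- Let n be an even natural number and let a, b be natural numbers with 1 ≤ a < b < n satisfying at least one of the six equations b = n − a, 2b = n + a, 2b = n + 2a, 2b = n, b = 2a, 2a = n, but with (a, b) ≠ (n/3, 2n/3). Then there exist distinct indices j, k ∈ ZMod n such that the blocks B_j = {j, j + a, j + b} and B_k = {k, k + a, k + b} of 𝒞(n, a, b) satisfy |B_j ∩ B_k| = 2. -/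
lemma castEqAux (n x y : ℕ) : (x : ZMod n) = (y : ZMod n) ↔ x % n = y % n := by
  rw [ZMod.natCast_eq_natCast_iff]; rfl

lemma modCasesAux {n u v : ℕ} (hn : 0 < n) (hu : u < 3 * n) (hv : v < 3 * n)
    (h : u % n = v % n) : u = v ∨ u = v + n ∨ u = v + 2 * n ∨ v = u + n ∨ v = u + 2 * n := by
  rcases Nat.le_total u v with hle | hle
  · obtain ⟨k, hk⟩ := (Nat.modEq_iff_dvd' hle).mp h
    have hk3 : k < 3 := by
      by_contra hc
      push_neg at hc
      have : 3 * n ≤ n * k := by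
        calc 3 * n = n * 3 := by ring
        _ ≤ n * k := Nat.mul_le_mul_left n hc
      omega
    interval_cases k <;> omega
  · obtain ⟨k, hk⟩ := (Nat.modEq_iff_dvd' hle).mp h.symm
    have hk3 : k < 3 := by
      by_contra hc
      push_neg at hc
      have : 3 * n ≤ n * k := by
        calc 3 * n = n * 3 := by ring
        _ ≤ n * k := Nat.mul_le_mul_left n hc
      omega
    interval_cases k <;> omega

lemma interAux (n a b c x₁ x₂ : ℕ)
    (hkj : ¬ c % n = 0 % n)
    (hx : ¬ x₁ % n = x₂ % n)
    (h1L : x₁ % n = 0 % n ∨ x₁ % n = a % n ∨ x₁ % n = b % n)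
    (h1R : x₁ % n = c % n ∨ x₁ % n = (c + a) % n ∨ x₁ % n = (c + b) % n)
    (h2L : x₂ % n = 0 % n ∨ x₂ % n = a % n ∨ x₂ % n = b % n)
    (h2R : x₂ % n = c % n ∨ x₂ % n = (c + a) % n ∨ x₂ % n = (c + b) % n)
    (hfwd : ∀ t, (t = 0 ∨ t = a ∨ t = b) →
      (t % n = c % n ∨ t % n = (c + a) % n ∨ t % n = (c + b) % n) →
      (t % n = x₁ % n ∨ t % n = x₂ % n)) :
    ∃ j k : ZMod n, j ≠ k ∧
      (({j, j + (a : ZMod n), j + (b : ZMod n)} : Finset (ZMod n)) ∩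
        ({k, k + (a : ZMod n), k + (b : ZMod n)} : Finset (ZMod n))).card = 2 := by
  have z0 : (0 : ZMod n) = ((0 : ℕ) : ZMod n) := by norm_num
  refine ⟨0, (c : ZMod n), ?_, ?_⟩
  · intro h
    exact hkj ((castEqAux n c 0).mp (z0 ▸ h.symm))
  · have hset : (({(0 : ZMod n), 0 + (a : ZMod n), 0 + (b : ZMod n)} : Finset (ZMod n)) ∩
        ({(c : ZMod n), (c : ZMod n) + (a : ZMod n), (c : ZMod n) + (b : ZMod n)} :
          Finset (ZMod n))) = {(x₁ : ZMod n), (x₂ : ZMod n)} := by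
      ext z
      simp only [Finset.mem_inter, Finset.mem_insert, Finset.mem_singleton, zero_add,
        ← Nat.cast_add]
      constructor
      · rintro ⟨h1, h2⟩
        have key : ∀ t : ℕ, (t : ZMod n) = z → (t = 0 ∨ t = a ∨ t = b) →
            (z = (x₁ : ZMod n) ∨ z = (x₂ : ZMod n)) := by
          intro t ht hmem
          have h2' : t % n = c % n ∨ t % n = (c + a) % n ∨ t % n = (c + b) % n := by
            rcases h2 with h | h | h
            · exact Or.inl ((castEqAux n t c).mp (ht.trans h))
            · exact Or.inr (Or.inl ((castEqAux n t (c + a)).mp (ht.trans h)))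
            · exact Or.inr (Or.inr ((castEqAux n t (c + b)).mp (ht.trans h)))
          rcases hfwd t hmem h2' with h | h
          · exact Or.inl (ht.symm.trans ((castEqAux n t x₁).mpr h))
          · exact Or.inr (ht.symm.trans ((castEqAux n t x₂).mpr h))
        rcases h1 with h | h | h
        · exact key 0 (by rw [← z0, h]) (Or.inl rfl)
        · exact key a h.symm (Or.inr (Or.inl rfl))
        · exact key b h.symm (Or.inr (Or.inr rfl))
      · have mem : ∀ t : ℕ,
            (t % n = 0 % n ∨ t % n = a % n ∨ t % n = b % n) →
            (t % n = c % n ∨ t % n = (c + a) % n ∨ t % n = (c + b) % n) →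
            ((t : ZMod n) = 0 ∨ (t : ZMod n) = (a : ZMod n) ∨ (t : ZMod n) = (b : ZMod n)) ∧
            ((t : ZMod n) = (c : ZMod n) ∨ (t : ZMod n) = ((c + a : ℕ) : ZMod n) ∨
              (t : ZMod n) = ((c + b : ℕ) : ZMod n)) := by
          intro t htL htR
          constructor
          · rcases htL with h | h | h
            · exact Or.inl (by rw [z0]; exact (castEqAux n t 0).mpr h)
            · exact Or.inr (Or.inl ((castEqAux n t a).mpr h))
            · exact Or.inr (Or.inr ((castEqAux n t b).mpr h))
          · rcases htR with h | h | h
            · exact Or.inl ((castEqAux n t c).mpr h)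
            · exact Or.inr (Or.inl ((castEqAux n t (c + a)).mpr h))
            · exact Or.inr (Or.inr ((castEqAux n t (c + b)).mpr h))
        rintro (rfl | rfl)
        · exact mem x₁ h1L h1R
        · exact mem x₂ h2L h2R
    rw [hset, Finset.card_insert_of_notMem, Finset.card_singleton]
    simp only [Finset.mem_singleton]
    intro h
    exact hx ((castEqAux n x₁ x₂).mp h)

/-- For `n` even and `1 ≤ a < b < n` satisfying at least one of the six
degeneracy equations but with `(a, b) ≠ (n/3, 2n/3)`, some two blocks of `𝒞(n, a, b)`
with distinct indices share exactly two points. -/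
theorem generalizedCyclic_two_point_intersection (n a b : ℕ) (hn : 2 ∣ n)
    (ha : 1 ≤ a) (hab : a < b) (hbn : b < n)
    (hdeg : a + b = n ∨ 2 * b = n + a ∨ 2 * b = n + 2 * a ∨ 2 * b = n ∨ b = 2 * a ∨ 2 * a = n)
    (hne : ¬ (a = n / 3 ∧ b = 2 * n / 3)) :
    ∃ j k : ZMod n, j ≠ k ∧
      (({j, j + (a : ZMod n), j + (b : ZMod n)} : Finset (ZMod n)) ∩
        ({k, k + (a : ZMod n), k + (b : ZMod n)} : Finset (ZMod n))).card = 2 := by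
  rcases hdeg with h | h | h | h | h | h
  · -- a + b = n : take c = a, intersection {0, a}
    refine interAux n a b a 0 a ?_ ?_ ?_ ?_ ?_ ?_ ?_
    · intro hq
      rcases modCasesAux (by omega) (by omega) (by omega) hq with h' | h' | h' | h' | h' <;> omega
    · intro hq
      rcases modCasesAux (by omega) (by omega) (by omega) hq with h' | h' | h' | h' | h' <;> omega
    · exact Or.inl rfl
    · exact Or.inr (Or.inr (by rw [show a + b = n from h, Nat.mod_self, Nat.zero_mod]))
    · exact Or.inr (Or.inl rfl)
    · exact Or.inl rfl
    · intro t ht h2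
      rcases ht with rfl | rfl | rfl
      · exact Or.inl rfl
      · exact Or.inr rfl
      · exfalso
        rcases h2 with h' | h' | h' <;>
          rcases modCasesAux (by omega) (by omega) (by omega) h' with h'' | h'' | h'' | h'' | h'' <;>
            omega
  · -- 2b = n + a : take c = b, intersection {a, b}
    refine interAux n a b b a b ?_ ?_ ?_ ?_ ?_ ?_ ?_
    · intro hq
      rcases modCasesAux (by omega) (by omega) (by omega) hq with h' | h' | h' | h' | h' <;> omega
    · intro hq
      rcases modCasesAux (by omega) (by omega) (by omega) hq with h' | h' | h' | h' | h' <;> omega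
    · exact Or.inr (Or.inl rfl)
    · exact Or.inr (Or.inr (by rw [show b + b = a + n by omega, Nat.add_mod_right]))
    · exact Or.inr (Or.inr rfl)
    · exact Or.inl rfl
    · intro t ht h2
      rcases ht with rfl | rfl | rfl
      · exfalso
        rcases h2 with h' | h' | h' <;>
          rcases modCasesAux (by omega) (by omega) (by omega) h' with h'' | h'' | h'' | h'' | h'' <;>
            omega
      · exact Or.inl rfl
      · exact Or.inr rfl
  · -- 2b = n + 2a : take c = b - a, intersection {a, b}
    refine interAux n a b (b - a) a b ?_ ?_ ?_ ?_ ?_ ?_ ?_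
    · intro hq
      rcases modCasesAux (by omega) (by omega) (by omega) hq with h' | h' | h' | h' | h' <;> omega
    · intro hq
      rcases modCasesAux (by omega) (by omega) (by omega) hq with h' | h' | h' | h' | h' <;> omega
    · exact Or.inr (Or.inl rfl)
    · exact Or.inr (Or.inr (by rw [show b - a + b = a + n by omega, Nat.add_mod_right]))
    · exact Or.inr (Or.inr rfl)
    · exact Or.inr (Or.inl (by rw [show b - a + a = b by omega]))
    · intro t ht h2
      rcases ht with rfl | rfl | rfl
      · exfalso
        rcases h2 with h' | h' | h' <;>
          rcases modCasesAux (by omega) (by omega) (by omega) h' with h'' | h'' | h'' | h'' | h'' <;>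
            omega
      · exact Or.inl rfl
      · exact Or.inr rfl
  · -- 2b = n : take c = b, intersection {0, b}
    refine interAux n a b b 0 b ?_ ?_ ?_ ?_ ?_ ?_ ?_
    · intro hq
      rcases modCasesAux (by omega) (by omega) (by omega) hq with h' | h' | h' | h' | h' <;> omega
    · intro hq
      rcases modCasesAux (by omega) (by omega) (by omega) hq with h' | h' | h' | h' | h' <;> omega
    · exact Or.inl rfl
    · exact Or.inr (Or.inr (by rw [show b + b = n by omega, Nat.mod_self, Nat.zero_mod]))
    · exact Or.inr (Or.inr rfl)
    · exact Or.inl rfl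
    · intro t ht h2
      rcases ht with rfl | rfl | rfl
      · exact Or.inl rfl
      · exfalso
        rcases h2 with h' | h' | h' <;>
          rcases modCasesAux (by omega) (by omega) (by omega) h' with h'' | h'' | h'' | h'' | h'' <;>
            omega
      · exact Or.inr rfl
  · -- b = 2a : take c = a, intersection {a, b}
    refine interAux n a b a a b ?_ ?_ ?_ ?_ ?_ ?_ ?_
    · intro hq
      rcases modCasesAux (by omega) (by omega) (by omega) hq with h' | h' | h' | h' | h' <;> omega
    · intro hq
      rcases modCasesAux (by omega) (by omega) (by omega) hq with h' | h' | h' | h' | h' <;> omega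
    · exact Or.inr (Or.inl rfl)
    · exact Or.inl rfl
    · exact Or.inr (Or.inr rfl)
    · exact Or.inr (Or.inl (by rw [show a + a = b by omega]))
    · intro t ht h2
      rcases ht with rfl | rfl | rfl
      · exfalso
        rcases h2 with h' | h' | h' <;>
          rcases modCasesAux (by omega) (by omega) (by omega) h' with h'' | h'' | h'' | h'' | h'' <;>
            omega
      · exact Or.inl rfl
      · exact Or.inr rfl
  · -- 2a = n : take c = a, intersection {0, a}
    refine interAux n a b a 0 a ?_ ?_ ?_ ?_ ?_ ?_ ?_
    · intro hq
      rcases modCasesAux (by omega) (by omega) (by omega) hq with h' | h' | h' | h' | h' <;> omega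
    · intro hq
      rcases modCasesAux (by omega) (by omega) (by omega) hq with h' | h' | h' | h' | h' <;> omega
    · exact Or.inl rfl
    · exact Or.inr (Or.inl (by rw [show a + a = n by omega, Nat.mod_self, Nat.zero_mod]))
    · exact Or.inr (Or.inl rfl)
    · exact Or.inl rfl
    · intro t ht h2
      rcases ht with rfl | rfl | rfl
      · exact Or.inl rfl
      · exact Or.inr rfl
      · exfalso
        rcases h2 with h' | h' | h' <;>
          rcases modCasesAux (by omega) (by omega) (by omega) h' with h'' | h'' | h'' | h'' | h'' <;>
            omega
end
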